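/- On S² ⊂ ℝ³, with O₃=xyz, O₄=x⁴+y⁴+z⁴, O₆=(x²−y²)(y²−z²)(z²−x²), one has Γ(O₃,O₆) = −18 O₃O₆, Γ(O₄,O₆) = 8O₆(2−3O₄), and Γ(O₆,O₆) = −54 O₃²O₄ + 18 O₃² − 3O₄² + 4O₄ − 1 − 36 O₆², modulo x²+y²+z²−1. -/
import Mathlib


open MvPolynomial

/-- The spherical carré du champ operator on polynomials in three variables:
`Γ(f,g) = ∇f·∇g − (x·∇f)(x·∇g)`. -/
noncomputable def sphGamma (f g : MvPolynomial (Fin 3) ℝ) : MvPolynomial (Fin 3) ℝ :=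
  (∑ i : Fin 3, pderiv i f * pderiv i g)
    - (∑ i : Fin 3, X i * pderiv i f) * (∑ i : Fin 3, X i * pderiv i g)

set_option maxHeartbeats 4000000 in
theorem stmt14 (x y z : ℝ) (h : x ^ 2 + y ^ 2 + z ^ 2 = 1) :
    let O₃ : MvPolynomial (Fin 3) ℝ := X 0 * X 1 * X 2
    let O₄ : MvPolynomial (Fin 3) ℝ := X 0 ^ 4 + X 1 ^ 4 + X 2 ^ 4
    let O₆ : MvPolynomial (Fin 3) ℝ :=
      (X 0 ^ 2 - X 1 ^ 2) * (X 1 ^ 2 - X 2 ^ 2) * (X 2 ^ 2 - X 0 ^ 2)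
    let ev : MvPolynomial (Fin 3) ℝ → ℝ := eval ![x, y, z]
    ev (sphGamma O₃ O₆) = -18 * ev O₃ * ev O₆ ∧
    ev (sphGamma O₄ O₆) = 8 * ev O₆ * (2 - 3 * ev O₄) ∧
    ev (sphGamma O₆ O₆) = -54 * (ev O₃) ^ 2 * ev O₄ + 18 * (ev O₃) ^ 2 - 3 * (ev O₄) ^ 2
        + 4 * ev O₄ - 1 - 36 * (ev O₆) ^ 2 := by
  intro O₃ O₄ O₆ ev
  have e : ∀ p : MvPolynomial (Fin 3) ℝ, ev p = eval ![x, y, z] p := fun _ => rfl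
  simp only [O₃, O₄, O₆, ev, sphGamma, Fin.sum_univ_three, map_add, map_sub, map_mul, map_pow,
    pderiv_mul, Derivation.leibniz, Derivation.leibniz_pow,
    pderiv_X_self, pderiv_X_of_ne (by decide : (0:Fin 3) ≠ 1),
    pderiv_X_of_ne (by decide : (0:Fin 3) ≠ 2), pderiv_X_of_ne (by decide : (1:Fin 3) ≠ 0),
    pderiv_X_of_ne (by decide : (1:Fin 3) ≠ 2), pderiv_X_of_ne (by decide : (2:Fin 3) ≠ 0),
    pderiv_X_of_ne (by decide : (2:Fin 3) ≠ 1),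
    map_ofNat, smul_eq_mul, nsmul_eq_mul, mul_zero, zero_mul, mul_one, one_mul, add_zero,
    zero_add, sub_zero, zero_sub, map_one, map_zero, eval_X, eval_add, eval_sub, eval_mul,
    eval_pow, map_neg, map_one, map_zero, Matrix.cons_val_zero, Matrix.cons_val_one, Matrix.head_cons,
    Matrix.cons_val_two, Matrix.tail_cons, Nat.cast_ofNat]
  refine ⟨?_, ?_, ?_⟩
  · ring
  · linear_combination ((16:ℝ)*y^2*z^4 + (-16:ℝ)*y^4*z^2 + (-16:ℝ)*x^2*z^4 + (16:ℝ)*x^2*y^4 + (16:ℝ)*x^4*z^2 + (-16:ℝ)*x^4*y^2) * h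
  · linear_combination ((-1:ℝ) + (-1:ℝ)*z^2 + (3:ℝ)*z^4 + (3:ℝ)*z^6 + (-1:ℝ)*y^2 + (-2:ℝ)*y^2*z^2 + (1:ℝ)*y^2*z^4 + (4:ℝ)*y^2*z^6 + (3:ℝ)*y^4 + (1:ℝ)*y^4*z^2 + (-4:ℝ)*y^4*z^4 + (3:ℝ)*y^6 + (4:ℝ)*y^6*z^2 + (-1:ℝ)*x^2 + (-2:ℝ)*x^2*z^2 + (1:ℝ)*x^2*z^4 + (4:ℝ)*x^2*z^6 + (-2:ℝ)*x^2*y^2 + (12:ℝ)*x^2*y^2*z^2 + (14:ℝ)*x^2*y^2*z^4 + (1:ℝ)*x^2*y^4 + (14:ℝ)*x^2*y^4*z^2 + (4:ℝ)*x^2*y^6 + (3:ℝ)*x^4 + (1:ℝ)*x^4*z^2 + (-4:ℝ)*x^4*z^4 + (3:ℝ)*x^6 + (4:ℝ)*x^6*z^2 + (4:ℝ)*x^6*y^2 + (1:ℝ)*x^4*y^2 + (14:ℝ)*x^4*y^2*z^2 + (-4:ℝ)*x^4*y^4) * h
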